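/- arXiv:1710.05430 — 2 statements merged into one kernel-verified Lean document; each statement's English description precedes it below -/
import Mathlib

section
/- There exists a constant C ≥ 1, depending only on the Schottky data, such that for every nonempty word a = a_1…a_n and every z ∈ D_{a_n}, one has C^{−1}|I_a| ≤ |γ_{a'}'(z)| ≤ C|I_a|, where γ_{a'}' denotes the complex derivative of the Möbius transformation γ_{a'} (which has no pole on D_{a_n}). -/
open Complex MeasureTheory Metric Set
open scoped Real

noncomputable section


abbrev SL2R := Matrix.SpecialLinearGroup (Fin 2) ℝ

/-- Entries of a matrix in `SL(2,ℝ)`, as complex numbers. -/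
def mA (g : SL2R) : ℂ := ((g.1 0 0 : ℝ) : ℂ)
def mB (g : SL2R) : ℂ := ((g.1 0 1 : ℝ) : ℂ)
def mC (g : SL2R) : ℂ := ((g.1 1 0 : ℝ) : ℂ)
def mD (g : SL2R) : ℂ := ((g.1 1 1 : ℝ) : ℂ)

/-- The Möbius action of `SL(2,ℝ)` on the Riemann sphere `ℂ ∪ {∞}`. -/
def moebius (g : SL2R) : OnePoint ℂ → OnePoint ℂ := fun z =>
  match z with
  | OnePoint.infty => if mC g = 0 then OnePoint.infty else ((mA g / mC g : ℂ) : OnePoint ℂ)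
  | (w : ℂ) => if mC g * w + mD g = 0 then OnePoint.infty
      else (((mA g * w + mB g) / (mC g * w + mD g) : ℂ) : OnePoint ℂ)

/-- The Möbius action on `ℂ`, with junk value at the pole. -/
def moebiusC (g : SL2R) (z : ℂ) : ℂ := (mA g * z + mB g) / (mC g * z + mD g)

/-- The Möbius action on `ℝ`, with junk value at the pole. -/
def moebiusR (g : SL2R) (x : ℝ) : ℝ :=
  (g.1 0 0 * x + g.1 0 1) / (g.1 1 0 * x + g.1 1 1)

/-- The complex derivative `γ'(z) = (cz+d)⁻²` of a Möbius transformation (`det = 1`). -/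
def dMob (g : SL2R) (z : ℂ) : ℂ := ((mC g * z + mD g)⁻¹) ^ 2

/-- The involution `a ↦ ā` on the alphabet `{1, …, 2r}` (as `Fin (2*r)`). -/
def bar {r : ℕ} (a : Fin (2 * r)) : Fin (2 * r) :=
  if h : (a : ℕ) < r then ⟨(a : ℕ) + r, by omega⟩
  else ⟨(a : ℕ) - r, by have := a.isLt; omega⟩

/-- Schottky data: `2r` pairwise disjoint closed disks centered on the real axis and
`2r` elements of `SL(2,ℝ)` with `γ_a((ℂ∪{∞}) \ interior D_{ā}) = D_a`, `γ_ā = γ_a⁻¹`. -/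
structure Schottky (r : ℕ) where
  hr : 1 ≤ r
  center : Fin (2 * r) → ℝ
  radius : Fin (2 * r) → ℝ
  radius_pos : ∀ a, 0 < radius a
  disj : Pairwise fun a b =>
    Disjoint (closedBall ((center a : ℝ) : ℂ) (radius a)) (closedBall ((center b : ℝ) : ℂ) (radius b))
  γ : Fin (2 * r) → SL2R
  γ_bar : ∀ a, γ (bar a) = (γ a)⁻¹
  γ_maps : ∀ a, moebius (γ a) ''
      (univ \ ((fun z : ℂ => (z : OnePoint ℂ)) '' interior (closedBall ((center (bar a) : ℝ) : ℂ) (radius (bar a)))))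
    = (fun z : ℂ => (z : OnePoint ℂ)) '' closedBall ((center a : ℝ) : ℂ) (radius a)

/-- Words: finite sequences of letters with `a_{j+1} ≠ ā_j`. -/
def IsWord {r : ℕ} (w : List (Fin (2 * r))) : Prop := w.Chain' fun x y => y ≠ bar x

/-- The word `ā := ā_n ⋯ ā_1`. -/
def barWord {r : ℕ} (w : List (Fin (2 * r))) : List (Fin (2 * r)) := (w.map bar).reverse

namespace Schottky

variable {r : ℕ} (S : Schottky r)

/-- The disk `D_a` for a letter `a`. -/
def disk (a : Fin (2 * r)) : Set ℂ := closedBall ((S.center a : ℝ) : ℂ) (S.radius a)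

/-- `γ_w := γ_{a_1} ⋯ γ_{a_n}`. -/
def g (w : List (Fin (2 * r))) : SL2R := (w.map S.γ).prod

/-- The disk `D_w := γ_{w'}(D_{a_n})` of a nonempty word, as a subset of the Riemann sphere. -/
def sdisk : List (Fin (2 * r)) → Set (OnePoint ℂ)
  | [] => ∅
  | a :: w => moebius (S.g ((a :: w).dropLast)) ''
      ((fun z : ℂ => (z : OnePoint ℂ)) '' S.disk ((a :: w).getLast (List.cons_ne_nil a w)))

/-- The disk `D_w` as a subset of `ℂ`. -/
def wdisk (w : List (Fin (2 * r))) : Set ℂ := {z : ℂ | (z : OnePoint ℂ) ∈ S.sdisk w}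

/-- The interval `I_w = D_w ∩ ℝ`, as a subset of `ℝ`. -/
def wint (w : List (Fin (2 * r))) : Set ℝ := {x : ℝ | ((x : ℝ) : ℂ) ∈ S.wdisk w}

/-- The length `|I_w|` of the interval `I_w`. -/
def wlen (w : List (Fin (2 * r))) : ℝ := Metric.diam (S.wint w)

/-- `D = ⋃_{a ∈ A} D_a`. -/
def D : Set ℂ := ⋃ a, S.disk a

/-- `I = D ∩ ℝ`, as a subset of `ℝ`. -/
def Ire : Set ℝ := {x : ℝ | ((x : ℝ) : ℂ) ∈ S.D}

/-- `D₂ = ⋃_{|w| = 2} D_w`. -/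
def D₂ : Set ℂ := ⋃ (a : Fin (2 * r)), ⋃ (b : Fin (2 * r)), ⋃ (_ : b ≠ bar a), S.wdisk [a, b]

/-- `I'_a` for a letter `a`: the convex hull of `⋃_{b ≠ ā} I_{ab}`. -/
def iprimeLetter (a : Fin (2 * r)) : Set ℝ :=
  convexHull ℝ (⋃ (b : Fin (2 * r)), ⋃ (_ : b ≠ bar a), S.wint [a, b])

/-- `I'_w := γ_{w'}(I'_{a_n})` for a nonempty word `w`. -/
def iprime : List (Fin (2 * r)) → Set ℝ
  | [] => ∅
  | a :: w => moebiusR (S.g ((a :: w).dropLast)) ''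
      S.iprimeLetter ((a :: w).getLast (List.cons_ne_nil a w))

/-- The partition `Z(τ)`. -/
def Ztau (τ : ℝ) : Set (List (Fin (2 * r))) :=
  {w | w ≠ [] ∧ IsWord w ∧ S.wlen w ≤ τ ∧ (w.dropLast = [] ∨ τ < S.wlen w.dropLast)}

/-- The limit set `Λ_Γ ⊂ ℝ`. -/
def limitSet : Set ℝ :=
  {x : ℝ | ∀ n : ℕ, 1 ≤ n → ∃ w : List (Fin (2 * r)), IsWord w ∧ w.length = n ∧ x ∈ S.wint w}

/-- The τ-neighbourhood `Λ_Γ(τ) ⊂ ℝ` of the limit set. -/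
def limitSetNbhd (τ : ℝ) : Set ℝ := {x : ℝ | ∃ y ∈ S.limitSet, |x - y| ≤ τ}

end Schottky

/-- `ℓ` is a holomorphic branch on `U` of the logarithm of the derivative of the Möbius
transformation of `g`, real on `U ∩ ℝ`. -/
structure IsLogBranch (g : SL2R) (U : Set ℂ) (ℓ : ℂ → ℂ) : Prop where
  holo : DifferentiableOn ℂ ℓ U
  exp_eq : ∀ z ∈ U, Complex.exp (ℓ z) = dMob g z
  real_on : ∀ x : ℝ, ((x : ℝ) : ℂ) ∈ U → (ℓ ((x : ℝ) : ℂ)).im = 0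

/-- A family of branches `ℓ a b` of `log γ_a'` on `D_b`, for all `a ≠ b̄`. -/
def IsBranchFamily {r : ℕ} (S : Schottky r) (ℓ : Fin (2 * r) → Fin (2 * r) → ℂ → ℂ) : Prop :=
  ∀ a b : Fin (2 * r), a ≠ bar b → IsLogBranch (S.γ a) (S.disk b) (ℓ a b)

/-- The fixed-point equation `L_s u = u` on the interior of `D`, written pointwise. -/
def TransferFixed {r : ℕ} (S : Schottky r) (s : ℂ)
    (ℓ : Fin (2 * r) → Fin (2 * r) → ℂ → ℂ) (u : ℂ → ℂ) : Prop :=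
  ∀ b : Fin (2 * r), ∀ z ∈ interior (S.disk b),
    u z = ∑ a : Fin (2 * r), if a ≠ bar b then
      Complex.exp (s * ℓ a b z) * u (moebiusC (S.γ a) z) else 0

/-- The transfer operator `L_s`, as an operator on functions. -/
def transferOp {r : ℕ} (S : Schottky r) (s : ℂ)
    (ℓ : Fin (2 * r) → Fin (2 * r) → ℂ → ℂ) (u : ℂ → ℂ) : ℂ → ℂ := fun z =>
  ∑ b : Fin (2 * r), (S.disk b).indicator
    (fun w => ∑ a : Fin (2 * r), if a ≠ bar b then
      Complex.exp (s * ℓ a b w) * u (moebiusC (S.γ a) w) else 0) z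

/-- A partition: a finite set of nonempty words such that every long enough word
has exactly one prefix in it. -/
def IsPartition {r : ℕ} (S : Schottky r) (Z : Finset (List (Fin (2 * r)))) : Prop :=
  (∀ w ∈ Z, w ≠ [] ∧ IsWord w) ∧
  ∃ N : ℕ, ∀ w : List (Fin (2 * r)), IsWord w → N ≤ w.length →
    ∃! p : List (Fin (2 * r)), p ∈ Z ∧ p <+: w


/-! ### Auxiliary lemmas for `stmt0` -/

lemma det_rel (g : SL2R) : mA g * mD g - mB g * mC g = 1 := by
  have h := g.2
  rw [Matrix.det_fin_two] at h
  unfold mA mB mC mD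
  exact_mod_cast congrArg (Complex.ofReal) h

lemma det_relR (g : SL2R) : g.1 0 0 * g.1 1 1 - g.1 0 1 * g.1 1 0 = 1 := by
  have h := g.2; rwa [Matrix.det_fin_two] at h

lemma mA_mul (g h : SL2R) : mA (g*h) = mA g * mA h + mB g * mC h := by
  unfold mA mB mC; show ((((g.1*h.1)) 0 0 : ℝ) : ℂ) = _
  rw [Matrix.mul_apply, Fin.sum_univ_two]; push_cast; ring
lemma mB_mul (g h : SL2R) : mB (g*h) = mA g * mB h + mB g * mD h := by
  unfold mA mB mD; show ((((g.1*h.1)) 0 1 : ℝ) : ℂ) = _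
  rw [Matrix.mul_apply, Fin.sum_univ_two]; push_cast; ring
lemma mC_mul (g h : SL2R) : mC (g*h) = mC g * mA h + mD g * mC h := by
  unfold mA mC mD; show ((((g.1*h.1)) 1 0 : ℝ) : ℂ) = _
  rw [Matrix.mul_apply, Fin.sum_univ_two]; push_cast; ring
lemma mD_mul (g h : SL2R) : mD (g*h) = mC g * mB h + mD g * mD h := by
  unfold mB mC mD; show ((((g.1*h.1)) 1 1 : ℝ) : ℂ) = _
  rw [Matrix.mul_apply, Fin.sum_univ_two]; push_cast; ring

lemma moebius_coe (g : SL2R) (w : ℂ) :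
    moebius g (w : OnePoint ℂ) = if mC g * w + mD g = 0 then OnePoint.infty
      else (((mA g * w + mB g) / (mC g * w + mD g) : ℂ) : OnePoint ℂ) := rfl
lemma moebius_infty (g : SL2R) :
    moebius g OnePoint.infty = if mC g = 0 then OnePoint.infty
      else ((mA g / mC g : ℂ) : OnePoint ℂ) := rfl

lemma moebius_mul (g h : SL2R) (z : OnePoint ℂ) :
    moebius (g * h) z = moebius g (moebius h z) := by
  have dg := det_rel g
  have dh := det_rel h
  cases z with
  | infty =>
    rw [moebius_infty, moebius_infty]
    by_cases hCh : mC h = 0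
    · have hAh : mA h ≠ 0 := by
        intro h0; rw [h0, hCh] at dh; simp at dh
      rw [if_pos hCh, moebius_infty]
      by_cases hCg : mC g = 0
      · rw [if_pos (by rw [mC_mul, hCh, hCg]; ring), if_pos hCg]
      · rw [if_neg (by rw [mC_mul, hCh]; simpa using mul_ne_zero hCg hAh),
          if_neg hCg, mA_mul, mC_mul, hCh]
        congr 1
        field_simp
        ring
    · rw [if_neg hCh, moebius_coe]
      by_cases hz : mC g * (mA h / mC h) + mD g = 0
      · rw [if_pos hz, if_pos (by rw [mC_mul]; field_simp at hz; linear_combination hz)]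
      · have hd : mC (g*h) ≠ 0 := by
          rw [mC_mul]; intro h0; apply hz; field_simp; linear_combination h0
        rw [if_neg hz, if_neg hd]
        congr 1
        rw [mA_mul, mC_mul]
        field_simp
  | coe w =>
    rw [moebius_coe h w]
    by_cases hDh : mC h * w + mD h = 0
    · rw [if_pos hDh, moebius_infty, moebius_coe]
      have hNh : mA h * w + mB h ≠ 0 := by
        intro hN
        have : (1:ℂ) = 0 := by linear_combination -dh + mA h * hDh - mC h * hN
        simp at this
      by_cases hCg : mC g = 0
      · rw [if_pos hCg, if_pos (show mC (g*h) * w + mD (g*h) = 0 by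
          rw [mC_mul, mD_mul]; linear_combination (mA h * w + mB h) * hCg + mD g * hDh)]
      · have hd : mC (g*h) * w + mD (g*h) ≠ 0 := by
          rw [mC_mul, mD_mul]
          intro h0
          exact (mul_ne_zero hCg hNh) (by linear_combination h0 - mD g * hDh)
        rw [if_neg hCg, if_neg hd]
        congr 1
        rw [div_eq_div_iff hd hCg, mA_mul, mB_mul, mC_mul, mD_mul]
        linear_combination (mC g * mB g - mA g * mD g) * hDh
    · rw [if_neg hDh, moebius_coe, moebius_coe]
      by_cases hz : mC g * ((mA h * w + mB h) / (mC h * w + mD h)) + mD g = 0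
      · rw [if_pos hz, if_pos (show mC (g*h) * w + mD (g*h) = 0 by
          rw [mC_mul, mD_mul]
          rw [mul_div_assoc', div_add' _ _ _ hDh] at hz
          linear_combination (div_eq_zero_iff.mp hz).resolve_right hDh)]
      · have hd : mC (g*h) * w + mD (g*h) ≠ 0 := by
          rw [mC_mul, mD_mul]
          intro h0
          apply hz
          rw [mul_div_assoc', div_add' _ _ _ hDh, div_eq_zero_iff]; left
          linear_combination h0
        rw [if_neg hz, if_neg hd]
        congr 1
        rw [div_eq_div_iff hd hz, mA_mul, mB_mul, mC_mul, mD_mul]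
        field_simp
        ring

namespace Schottky

variable {r : ℕ} (S : Schottky r)

lemma g_nil : S.g [] = 1 := rfl

lemma g_cons (a : Fin (2*r)) (w : List (Fin (2*r))) : S.g (a :: w) = S.γ a * S.g w := by
  simp [Schottky.g]

/-- Nesting: a nonempty word maps the complement of the interior of the disk of the
bar of its last letter into the disk of its first letter. -/
lemma nest : ∀ (w : List (Fin (2*r))) (a : Fin (2*r)), IsWord (a :: w) →
    moebius (S.g (a :: w)) ''
      (univ \ ((fun z : ℂ => (z : OnePoint ℂ)) ''
        interior (S.disk (bar ((a :: w).getLast (List.cons_ne_nil a w))))))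
    ⊆ (fun z : ℂ => (z : OnePoint ℂ)) '' S.disk a := by
  intro w
  induction w with
  | nil =>
    intro a _
    have hg : S.g [a] = S.γ a := by simp [Schottky.g]
    rw [hg]
    exact le_of_eq (S.γ_maps a)
  | cons b w' ih =>
    intro a h
    obtain ⟨hab, hbw⟩ := List.isChain_cons_cons.mp h
    have hlast : (a :: b :: w').getLast (List.cons_ne_nil a (b :: w'))
        = (b :: w').getLast (List.cons_ne_nil b w') := List.getLast_cons (List.cons_ne_nil b w')
    rw [hlast]
    have hcomp : moebius (S.g (a :: b :: w'))
        = moebius (S.γ a) ∘ moebius (S.g (b :: w')) := by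
      funext z
      rw [S.g_cons a (b :: w')]
      exact moebius_mul _ _ z
    rw [hcomp, Set.image_comp]
    have h1 := ih b hbw
    have h2 : (fun z : ℂ => (z : OnePoint ℂ)) '' S.disk b
        ⊆ univ \ ((fun z : ℂ => (z : OnePoint ℂ)) '' interior (S.disk (bar a))) := by
      rintro x ⟨y, hy, rfl⟩
      refine ⟨trivial, ?_⟩
      rintro ⟨y', hy', hyy⟩
      have : y' = y := OnePoint.coe_eq_coe.mp hyy
      subst this
      exact (Set.disjoint_left.mp (S.disj hab) hy) (interior_subset hy')
    calc moebius (S.γ a) '' (moebius (S.g (b :: w')) ''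
          (univ \ ((fun z : ℂ => (z : OnePoint ℂ)) ''
            interior (S.disk (bar ((b :: w').getLast (List.cons_ne_nil b w')))))))
        ⊆ moebius (S.γ a) '' ((fun z : ℂ => (z : OnePoint ℂ)) '' S.disk b) :=
          Set.image_mono h1
      _ ⊆ moebius (S.γ a) ''
          (univ \ ((fun z : ℂ => (z : OnePoint ℂ)) '' interior (S.disk (bar a)))) :=
          Set.image_mono h2
      _ ⊆ (fun z : ℂ => (z : OnePoint ℂ)) '' S.disk a := le_of_eq (S.γ_maps a)

lemma word_init {w : List (Fin (2*r))} {a : Fin (2*r)} (h : IsWord (w ++ [a])) : IsWord w :=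
  (List.isChain_append.mp h).1

lemma word_junction {w : List (Fin (2*r))} {a : Fin (2*r)} (h : IsWord (w ++ [a]))
    (hw : w ≠ []) : a ≠ bar (w.getLast hw) := by
  have h3 := (List.isChain_append.mp h).2.2
  exact h3 _ (by simp [List.getLast?_eq_getLast (h := hw)]) a rfl

lemma denom_ne_zero {w : List (Fin (2*r))} {a : Fin (2*r)} (h : IsWord (w ++ [a]))
    {z : ℂ} (hz : z ∈ S.disk a) : mC (S.g w) * z + mD (S.g w) ≠ 0 := by
  cases w with
  | nil =>
    have : mC (S.g []) = 0 ∧ mD (S.g []) = 1 := by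
      constructor <;> simp [Schottky.g, mC, mD, Matrix.SpecialLinearGroup.coe_one]
    rw [this.1, this.2]
    simp
  | cons c w' =>
    intro h0
    have hjun := word_junction h (List.cons_ne_nil c w')
    have hmem : (↑z : OnePoint ℂ) ∈ univ \ ((fun z : ℂ => (z : OnePoint ℂ)) ''
        interior (S.disk (bar ((c :: w').getLast (List.cons_ne_nil c w'))))) := by
      refine ⟨trivial, ?_⟩
      rintro ⟨y, hy, hyy⟩
      have : y = z := OnePoint.coe_eq_coe.mp hyy
      subst this
      exact (Set.disjoint_left.mp (S.disj hjun) hz) (interior_subset hy)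
    have := S.nest w' c (word_init h) (Set.mem_image_of_mem _ hmem)
    obtain ⟨y, -, hy⟩ := this
    rw [moebius_coe, if_pos h0] at hy
    exact OnePoint.coe_ne_infty y hy

lemma pole_mem {w : List (Fin (2*r))} {a : Fin (2*r)} (h : IsWord (w ++ [a]))
    (hc : mC (S.g w) ≠ 0) : ∃ b, b ≠ a ∧ (-(mD (S.g w)) / mC (S.g w)) ∈ S.disk b := by
  cases w with
  | nil =>
    exfalso
    exact hc (by simp [Schottky.g, mC, Matrix.SpecialLinearGroup.coe_one])
  | cons c w' =>
    have hjun := word_junction h (List.cons_ne_nil c w')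
    refine ⟨bar ((c :: w').getLast (List.cons_ne_nil c w')), Ne.symm hjun, ?_⟩
    by_contra hp
    set p : ℂ := -(mD (S.g (c :: w'))) / mC (S.g (c :: w')) with hpdef
    have hmem : (↑p : OnePoint ℂ) ∈ univ \ ((fun z : ℂ => (z : OnePoint ℂ)) ''
        interior (S.disk (bar ((c :: w').getLast (List.cons_ne_nil c w'))))) := by
      refine ⟨trivial, ?_⟩
      rintro ⟨y, hy, hyy⟩
      have : y = p := OnePoint.coe_eq_coe.mp hyy
      subst this
      exact hp (interior_subset hy)
    have := S.nest w' c (word_init h) (Set.mem_image_of_mem _ hmem)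
    obtain ⟨y, -, hy⟩ := this
    have h0 : mC (S.g (c :: w')) * p + mD (S.g (c :: w')) = 0 := by
      rw [hpdef]; field_simp; ring
    rw [moebius_coe, if_pos h0] at hy
    exact OnePoint.coe_ne_infty y hy

end Schottky

lemma moebiusC_ofReal (g : SL2R) (t : ℝ) : moebiusC g (t : ℂ) = ((moebiusR g t : ℝ) : ℂ) := by
  unfold moebiusC moebiusR mA mB mC mD
  push_cast
  ring

lemma real_preimage (g : SL2R) (y : ℂ) (x : ℝ) (hden : mC g * y + mD g ≠ 0)
    (h : moebiusC g y = (x : ℂ)) : ∃ t : ℝ, y = (t : ℂ) := by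
  have h' : mA g * y + mB g = (x : ℂ) * (mC g * y + mD g) := by
    rw [moebiusC, div_eq_iff hden] at h
    exact h
  have hne : mA g - (x : ℂ) * mC g ≠ 0 := by
    intro h0
    have hb : mB g - (x : ℂ) * mD g = 0 := by linear_combination h' - y * h0
    have : (1 : ℂ) = 0 := by
      linear_combination mD g * h0 - mC g * hb - det_rel g
    simp at this
  have hy : y = ((x : ℂ) * mD g - mB g) / (mA g - (x : ℂ) * mC g) := by
    rw [eq_div_iff hne]
    linear_combination h'
  refine ⟨(x * g.1 1 1 - g.1 0 1) / (g.1 0 0 - x * g.1 1 0), ?_⟩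
  rw [hy]
  unfold mA mB mC mD
  push_cast
  ring

lemma moebiusR_sub (g : SL2R) (s t : ℝ) (hs : g.1 1 0 * s + g.1 1 1 ≠ 0)
    (ht : g.1 1 0 * t + g.1 1 1 ≠ 0) :
    moebiusR g t - moebiusR g s
      = (t - s) / ((g.1 1 0 * t + g.1 1 1) * (g.1 1 0 * s + g.1 1 1)) := by
  have hdet := det_relR g
  unfold moebiusR
  rw [div_sub_div _ _ ht hs, div_eq_div_iff (mul_ne_zero ht hs) (mul_ne_zero ht hs)]
  linear_combination ((t - s) * ((g.1 1 0 * t + g.1 1 1) * (g.1 1 0 * s + g.1 1 1))) * hdet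

namespace Schottky

variable {r : ℕ} (S : Schottky r)

lemma sdisk_concat (w : List (Fin (2*r))) (a : Fin (2*r)) :
    S.sdisk (w ++ [a]) = moebius (S.g w) '' ((fun z : ℂ => (z : OnePoint ℂ)) '' S.disk a) := by
  cases w with
  | nil => simp [Schottky.sdisk]
  | cons c w' =>
    show S.sdisk (c :: (w' ++ [a])) = _
    rw [Schottky.sdisk]
    have h1 : (c :: (w' ++ [a])).dropLast = c :: w' := by
      show ((c :: w') ++ [a]).dropLast = c :: w'
      exact List.dropLast_concat
    have h2 : (c :: (w' ++ [a])).getLast (List.cons_ne_nil c (w' ++ [a])) = a := by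
      show ((c :: w') ++ [a]).getLast _ = a
      exact List.getLast_concat
    rw [h1, h2]

lemma mem_disk_ofReal {a : Fin (2*r)} {t : ℝ}
    (h : t ∈ Icc (S.center a - S.radius a) (S.center a + S.radius a)) : ((t : ℝ) : ℂ) ∈ S.disk a := by
  rw [Schottky.disk, mem_closedBall, Complex.isometry_ofReal.dist_eq, Real.dist_eq, abs_le]
  obtain ⟨h1, h2⟩ := h
  constructor <;> linarith

lemma wint_concat (w : List (Fin (2*r))) (a : Fin (2*r)) (h : IsWord (w ++ [a])) :
    S.wint (w ++ [a])
      = moebiusR (S.g w) '' Icc (S.center a - S.radius a) (S.center a + S.radius a) := by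
  ext x
  constructor
  · intro hx
    have hx' : ((x : ℝ) : ℂ) ∈ S.wdisk (w ++ [a]) := hx
    rw [Schottky.wdisk, Set.mem_setOf_eq, S.sdisk_concat w a] at hx'
    obtain ⟨o, ⟨y, hy, rfl⟩, ho⟩ := hx'
    have hden := S.denom_ne_zero h hy
    rw [moebius_coe, if_neg hden] at ho
    have hC : moebiusC (S.g w) y = ((x : ℝ) : ℂ) := OnePoint.coe_eq_coe.mp ho
    obtain ⟨t, rfl⟩ := real_preimage (S.g w) y x hden hC
    rw [moebiusC_ofReal] at hC
    refine ⟨t, ?_, Complex.ofReal_inj.mp hC⟩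
    rw [Schottky.disk, mem_closedBall, Complex.isometry_ofReal.dist_eq, Real.dist_eq,
      abs_le] at hy
    exact ⟨by linarith [hy.1], by linarith [hy.2]⟩
  · rintro ⟨t, ht, rfl⟩
    have hyd := S.mem_disk_ofReal ht
    have hden := S.denom_ne_zero h hyd
    show ((((moebiusR (S.g w) t : ℝ) : ℂ)) : OnePoint ℂ) ∈ S.sdisk (w ++ [a])
    rw [S.sdisk_concat w a]
    refine ⟨((t : ℝ) : ℂ), Set.mem_image_of_mem _ hyd, ?_⟩
    rw [moebius_coe, if_neg hden]
    rw [show (mA (S.g w) * ((t:ℝ):ℂ) + mB (S.g w)) / (mC (S.g w) * ((t:ℝ):ℂ) + mD (S.g w))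
      = moebiusC (S.g w) ((t:ℝ):ℂ) from rfl, moebiusC_ofReal]

lemma denomR_ne_zero {w : List (Fin (2*r))} {a : Fin (2*r)} (h : IsWord (w ++ [a]))
    {t : ℝ} (ht : t ∈ Icc (S.center a - S.radius a) (S.center a + S.radius a)) :
    (S.g w).1 1 0 * t + (S.g w).1 1 1 ≠ 0 := by
  intro h0
  apply S.denom_ne_zero h (S.mem_disk_ofReal ht)
  show mC (S.g w) * ((t:ℝ):ℂ) + mD (S.g w) = 0
  unfold mC mD
  push_cast
  exact_mod_cast congrArg (Complex.ofReal) h0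

/-- Positivity of the product of real denominators over the base interval. -/
lemma denom_prod_pos {w : List (Fin (2*r))} {a : Fin (2*r)} (h : IsWord (w ++ [a]))
    {s t : ℝ} (hs : s ∈ Icc (S.center a - S.radius a) (S.center a + S.radius a))
    (ht : t ∈ Icc (S.center a - S.radius a) (S.center a + S.radius a)) :
    0 < ((S.g w).1 1 0 * t + (S.g w).1 1 1) * ((S.g w).1 1 0 * s + (S.g w).1 1 1) := by
  set c : ℝ := (S.g w).1 1 0 with hc
  set d : ℝ := (S.g w).1 1 1 with hd
  by_cases hc0 : c = 0
  · have hd0 : d ≠ 0 := by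
      have := S.denomR_ne_zero h ht; rw [← hc, ← hd] at this; rw [hc0] at this
      simpa using this
    rw [hc0]
    simpa using mul_self_pos.mpr hd0
  · have hCne : mC (S.g w) ≠ 0 := by
      unfold mC; rw [← hc]; exact_mod_cast hc0
    obtain ⟨b, hba, hpb⟩ := S.pole_mem h hCne
    set p : ℝ := -d / c with hp
    have hpc : (↑p : ℂ) = -(mD (S.g w)) / mC (S.g w) := by
      rw [hp]; unfold mC mD; rw [← hc, ← hd]; push_cast; ring
    have hpb' : ((p : ℝ) : ℂ) ∈ S.disk b := by rw [hpc]; exact hpb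
    have hpIcc : p ∉ Icc (S.center a - S.radius a) (S.center a + S.radius a) := by
      intro hmem
      exact (Set.disjoint_left.mp (S.disj hba) hpb') (S.mem_disk_ofReal hmem)
    have hct : c * t + d = c * (t - p) := by rw [hp]; field_simp; ring
    have hcs : c * s + d = c * (s - p) := by rw [hp]; field_simp; ring
    rw [hct, hcs]
    have h2 : c * (t - p) * (c * (s - p)) = c^2 * ((t - p) * (s - p)) := by ring
    rw [h2]
    have hcp : 0 < c^2 := by
      have h1 : c^2 ≠ 0 := pow_ne_zero 2 hc0
      rcases (sq_nonneg c).lt_or_eq with hsq | hsq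
      · exact hsq
      · exact absurd hsq.symm h1
    have hpI : p < S.center a - S.radius a ∨ S.center a + S.radius a < p := by
      rcases lt_or_ge p (S.center a - S.radius a) with h1 | h1
      · exact Or.inl h1
      · rcases le_or_gt p (S.center a + S.radius a) with h2 | h2
        · exact absurd ⟨h1, h2⟩ hpIcc
        · exact Or.inr h2
    rcases hpI with hleft | hright
    · have h1 : 0 < t - p := by have := ht.1; linarith
      have h2 : 0 < s - p := by have := hs.1; linarith
      exact mul_pos hcp (mul_pos h1 h2)
    · have h1 : t - p < 0 := by have := ht.2; linarith
      have h2 : s - p < 0 := by have := hs.2; linarith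
      exact mul_pos hcp (mul_pos_of_neg_of_neg h1 h2)

lemma wlen_formula (w : List (Fin (2*r))) (a : Fin (2*r)) (h : IsWord (w ++ [a])) :
    S.wlen (w ++ [a]) = 2 * S.radius a /
      (((S.g w).1 1 0 * (S.center a + S.radius a) + (S.g w).1 1 1) *
        ((S.g w).1 1 0 * (S.center a - S.radius a) + (S.g w).1 1 1)) := by
  set c : ℝ := (S.g w).1 1 0
  set d : ℝ := (S.g w).1 1 1
  set l : ℝ := S.center a - S.radius a with hl
  set u : ℝ := S.center a + S.radius a with hu
  have hlu : l ≤ u := by have := (S.radius_pos a).le; rw [hl, hu]; linarith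
  have hlmem : l ∈ Icc l u := ⟨le_refl l, hlu⟩
  have humem : u ∈ Icc l u := ⟨hlu, le_refl u⟩
  set f : ℝ → ℝ := moebiusR (S.g w) with hf
  have hmono : ∀ s ∈ Icc l u, ∀ t ∈ Icc l u, s ≤ t → f s ≤ f t := by
    intro s hs t ht hst
    have hsub := moebiusR_sub (S.g w) s t (S.denomR_ne_zero h hs) (S.denomR_ne_zero h ht)
    have hpos := S.denom_prod_pos h hs ht
    have : 0 ≤ f t - f s := by
      rw [hf, hsub]
      exact div_nonneg (by linarith) hpos.le
    linarith
  have hsub : f '' Icc l u ⊆ Icc (f l) (f u) := by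
    rintro x ⟨t, ht, rfl⟩
    exact ⟨hmono l hlmem t ht ht.1, hmono t ht u humem ht.2⟩
  have hflu : f l ≤ f u := hmono l hlmem u humem hlu
  have hwint := S.wint_concat w a h
  have hbd : Bornology.IsBounded (f '' Icc l u) := (isBounded_Icc (f l) (f u)).subset hsub
  have hle : S.wlen (w ++ [a]) ≤ f u - f l := by
    rw [Schottky.wlen, hwint]
    calc Metric.diam (f '' Icc l u) ≤ Metric.diam (Icc (f l) (f u)) :=
          Metric.diam_mono hsub (isBounded_Icc _ _)
      _ = f u - f l := Real.diam_Icc hflu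
  have hge : f u - f l ≤ S.wlen (w ++ [a]) := by
    rw [Schottky.wlen, hwint]
    have h1 : f u ∈ f '' Icc l u := Set.mem_image_of_mem f humem
    have h2 : f l ∈ f '' Icc l u := Set.mem_image_of_mem f hlmem
    have := Metric.dist_le_diam_of_mem hbd h1 h2
    rw [Real.dist_eq, _root_.abs_of_nonneg (by linarith)] at this
    exact this
  have heq : S.wlen (w ++ [a]) = f u - f l := le_antisymm hle hge
  rw [heq, hf, moebiusR_sub (S.g w) l u (S.denomR_ne_zero h hlmem) (S.denomR_ne_zero h humem)]
  rw [show u - l = 2 * S.radius a by rw [hu, hl]; ring]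

end Schottky

namespace Schottky

variable {r : ℕ} (S : Schottky r)

lemma gap_pos (a b : Fin (2*r)) (hab : a ≠ b) :
    S.radius a + S.radius b < dist (S.center a) (S.center b) := by
  by_contra hcon
  push_neg at hcon
  have hra := S.radius_pos a
  have hrb := S.radius_pos b
  have hsum : 0 < S.radius a + S.radius b := by linarith
  set t : ℝ := S.radius a / (S.radius a + S.radius b) with htdef
  have ht0 : 0 ≤ t := div_nonneg hra.le hsum.le
  set q : ℂ := ↑(S.center a) + (t : ℂ) * (↑(S.center b) - ↑(S.center a)) with hq
  have hdd : ‖(↑(S.center b) - ↑(S.center a) : ℂ)‖ = dist (S.center a) (S.center b) := by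
    rw [← dist_eq_norm, Complex.isometry_ofReal.dist_eq, dist_comm]
  have h1 : q ∈ closedBall (↑(S.center a) : ℂ) (S.radius a) := by
    rw [mem_closedBall, dist_eq_norm]
    have he : q - ↑(S.center a) = (t:ℂ) * (↑(S.center b) - ↑(S.center a)) := by rw [hq]; ring
    rw [he, norm_mul, Complex.norm_real, hdd, Real.norm_eq_abs, _root_.abs_of_nonneg ht0]
    calc t * dist (S.center a) (S.center b) ≤ t * (S.radius a + S.radius b) := by
          apply mul_le_mul_of_nonneg_left hcon ht0
      _ = S.radius a := by rw [htdef]; exact div_mul_cancel₀ _ hsum.ne'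
  have h2 : q ∈ closedBall (↑(S.center b) : ℂ) (S.radius b) := by
    rw [mem_closedBall, dist_eq_norm]
    have h1t : (1 : ℝ) - t = S.radius b / (S.radius a + S.radius b) := by
      rw [htdef]; field_simp [hsum.ne']; ring
    have he : q - ↑(S.center b) = ((1 - t : ℝ):ℂ) * (↑(S.center a) - ↑(S.center b)) := by
      rw [hq]; push_cast; ring
    have hdd' : ‖(↑(S.center a) - ↑(S.center b) : ℂ)‖ = dist (S.center a) (S.center b) := by
      rw [← dist_eq_norm, Complex.isometry_ofReal.dist_eq]
    have h1t0 : 0 ≤ 1 - t := by rw [h1t]; exact div_nonneg hrb.le hsum.le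
    rw [he, norm_mul, Complex.norm_real, hdd', Real.norm_eq_abs, _root_.abs_of_nonneg h1t0]
    calc (1 - t) * dist (S.center a) (S.center b) ≤ (1 - t) * (S.radius a + S.radius b) := by
          apply mul_le_mul_of_nonneg_left hcon h1t0
      _ = S.radius b := by rw [h1t]; exact div_mul_cancel₀ _ hsum.ne'
  exact Set.disjoint_left.mp (S.disj hab) h1 h2

set_option maxHeartbeats 1000000 in
lemma exists_ratio : ∃ K : ℝ, 1 ≤ K ∧ ∀ (w : List (Fin (2*r))) (a : Fin (2*r)),
    IsWord (w ++ [a]) → ∀ z ∈ S.disk a, ∀ z' ∈ S.disk a,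
    ‖mC (S.g w) * z + mD (S.g w)‖ ≤ K * ‖mC (S.g w) * z' + mD (S.g w)‖ := by
  have h2r : 2 ≤ 2 * r := by have := S.hr; omega
  set P : Finset (Fin (2*r) × Fin (2*r)) :=
    Finset.univ.filter (fun p => p.1 ≠ p.2) with hPdef
  have hP : P.Nonempty := by
    refine ⟨(⟨0, by omega⟩, ⟨1, by omega⟩), ?_⟩
    rw [hPdef, Finset.mem_filter]
    exact ⟨Finset.mem_univ _, fun hcon => by simpa using congrArg Fin.val hcon⟩
  set δ : ℝ := P.inf' hP (fun p => dist (S.center p.1) (S.center p.2)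
    - S.radius p.1 - S.radius p.2) with hδdef
  set M : ℝ := P.sup' hP (fun p => dist (S.center p.1) (S.center p.2)
    + S.radius p.1 + S.radius p.2) with hMdef
  have hδ : 0 < δ := by
    rw [hδdef]
    rw [Finset.lt_inf'_iff]
    intro p hp
    have hne : p.1 ≠ p.2 := by simpa [hPdef] using hp
    have := S.gap_pos p.1 p.2 hne
    linarith
  refine ⟨max 1 (M/δ), le_max_left _ _, ?_⟩
  intro w a h z hz z' hz'
  set K := max 1 (M/δ) with hK
  by_cases hc : mC (S.g w) = 0
  · rw [hc]
    simp only [zero_mul, zero_add]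
    exact le_mul_of_one_le_left (norm_nonneg _) (le_max_left _ _)
  · obtain ⟨b, hba, hpb⟩ := S.pole_mem h hc
    set p : ℂ := -(mD (S.g w)) / mC (S.g w) with hp
    have hform : ∀ y : ℂ, mC (S.g w) * y + mD (S.g w) = mC (S.g w) * (y - p) := by
      intro y; rw [hp]; field_simp; ring
    have hpair : (a, b) ∈ P := by
      rw [hPdef, Finset.mem_filter]
      exact ⟨Finset.mem_univ _, fun hcon => hba hcon.symm⟩
    have hdab : dist ((S.center a : ℝ) : ℂ) ((S.center b : ℝ) : ℂ)
        = dist (S.center a) (S.center b) := Complex.isometry_ofReal.dist_eq _ _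
    have hza : dist z ((S.center a : ℝ) : ℂ) ≤ S.radius a := mem_closedBall.mp hz
    have hz'a : dist z' ((S.center a : ℝ) : ℂ) ≤ S.radius a := mem_closedBall.mp hz'
    have hpbd : dist p ((S.center b : ℝ) : ℂ) ≤ S.radius b := mem_closedBall.mp hpb
    have hub : dist z p ≤ M := by
      have htri := dist_triangle4 z ((S.center a : ℝ) : ℂ) ((S.center b : ℝ) : ℂ) p
      have hM : dist (S.center a) (S.center b) + S.radius a + S.radius b ≤ M := by
        rw [hMdef]
        exact Finset.le_sup'
          (fun p => dist (S.center p.1) (S.center p.2) + S.radius p.1 + S.radius p.2) hpair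
      rw [hdab] at htri
      have h2 : dist ((S.center b : ℝ) : ℂ) p ≤ S.radius b := by rw [dist_comm]; exact hpbd
      linarith
    have hlb : δ ≤ dist z' p := by
      have htri := dist_triangle4 ((S.center a : ℝ) : ℂ) z' p ((S.center b : ℝ) : ℂ)
      have hδle : δ ≤ dist (S.center a) (S.center b) - S.radius a - S.radius b := by
        rw [hδdef]
        exact Finset.inf'_le
          (fun p => dist (S.center p.1) (S.center p.2) - S.radius p.1 - S.radius p.2) hpair
      rw [hdab] at htri
      have h1 : dist ((S.center a : ℝ) : ℂ) z' ≤ S.radius a := by rw [dist_comm]; exact hz'a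
      linarith
    have hMK : M ≤ K * δ := by
      have : M / δ ≤ K := le_max_right _ _
      calc M = M / δ * δ := (div_mul_cancel₀ M hδ.ne').symm
        _ ≤ K * δ := by apply mul_le_mul_of_nonneg_right this hδ.le
    have hK1 : (1:ℝ) ≤ K := le_max_left _ _
    rw [hform z, hform z', norm_mul, norm_mul]
    have hzp : ‖z - p‖ = dist z p := by rw [dist_eq_norm]
    have hz'p : ‖z' - p‖ = dist z' p := by rw [dist_eq_norm]
    rw [hzp, hz'p]
    have hcn : 0 ≤ ‖mC (S.g w)‖ := norm_nonneg _
    calc ‖mC (S.g w)‖ * dist z p ≤ ‖mC (S.g w)‖ * (K * dist z' p) := by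
          apply mul_le_mul_of_nonneg_left _ hcn
          calc dist z p ≤ M := hub
            _ ≤ K * δ := hMK
            _ ≤ K * dist z' p := by
                apply mul_le_mul_of_nonneg_left hlb (by linarith)
      _ = K * (‖mC (S.g w)‖ * dist z' p) := by ring

end Schottky


set_option maxHeartbeats 1000000 in
/-- There is `C ≥ 1` depending only on the Schottky data such that for every
nonempty word `w ++ [a]` and every `z ∈ D_a`, the Möbius transformation `γ_{(w++[a])'} = γ_w`
has no pole on `D_a` and `C⁻¹|I_{w++[a]}| ≤ |γ_w'(z)| ≤ C|I_{w++[a]}|`. -/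
theorem stmt0 {r : ℕ} (S : Schottky r) :
    ∃ C : ℝ, 1 ≤ C ∧ ∀ (w : List (Fin (2 * r))) (a : Fin (2 * r)), IsWord (w ++ [a]) →
      ∀ z ∈ S.disk a,
        mC (S.g w) * z + mD (S.g w) ≠ 0 ∧
        C⁻¹ * S.wlen (w ++ [a]) ≤ ‖dMob (S.g w) z‖ ∧
        ‖dMob (S.g w) z‖ ≤ C * S.wlen (w ++ [a]) := by
  obtain ⟨K, hK1, hratio⟩ := S.exists_ratio
  have hK0 : (0:ℝ) < K := by linarith
  have hne : (Finset.univ : Finset (Fin (2*r))).Nonempty :=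
    ⟨⟨0, by have := S.hr; omega⟩, Finset.mem_univ _⟩
  set ρmin : ℝ := Finset.univ.inf' hne S.radius with hρmindef
  set ρmax : ℝ := Finset.univ.sup' hne S.radius with hρmaxdef
  have hρmin : 0 < ρmin := by
    rw [hρmindef, Finset.lt_inf'_iff]
    exact fun a _ => S.radius_pos a
  set C : ℝ := max (max (K^2 * (2*ρmax)) (K^2 / (2*ρmin))) 1 with hCdef
  have hC1 : (1:ℝ) ≤ C := le_max_right _ _
  have hC0 : (0:ℝ) < C := by linarith
  refine ⟨C, hC1, ?_⟩
  intro w a h z hz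
  have hden := S.denom_ne_zero h hz
  refine ⟨hden, ?_⟩
  set l : ℝ := S.center a - S.radius a with hl
  set u : ℝ := S.center a + S.radius a with hu
  have hρ := S.radius_pos a
  have hlu : l ≤ u := by rw [hl, hu]; linarith
  have hlmem : l ∈ Icc l u := ⟨le_refl l, hlu⟩
  have humem : u ∈ Icc l u := ⟨hlu, le_refl u⟩
  set du : ℝ := (S.g w).1 1 0 * u + (S.g w).1 1 1 with hdu
  set dl : ℝ := (S.g w).1 1 0 * l + (S.g w).1 1 1 with hdl
  have hwf : S.wlen (w ++ [a]) = 2 * S.radius a / (du * dl) := S.wlen_formula w a h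
  have hprod : 0 < du * dl := S.denom_prod_pos h hlmem humem
  set X : ℝ := ‖mC (S.g w) * z + mD (S.g w)‖ with hX
  have hX0 : 0 < X := by rw [hX]; exact norm_pos_iff.mpr hden
  have hUc : mC (S.g w) * ((u:ℝ):ℂ) + mD (S.g w) = ((du : ℝ) : ℂ) := by
    rw [hdu]; unfold mC mD; push_cast; ring
  have hLc : mC (S.g w) * ((l:ℝ):ℂ) + mD (S.g w) = ((dl : ℝ) : ℂ) := by
    rw [hdl]; unfold mC mD; push_cast; ring
  set U : ℝ := ‖mC (S.g w) * ((u:ℝ):ℂ) + mD (S.g w)‖ with hUdef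
  set L : ℝ := ‖mC (S.g w) * ((l:ℝ):ℂ) + mD (S.g w)‖ with hLdef
  have hUabs : U = |du| := by rw [hUdef, hUc, Complex.norm_real, Real.norm_eq_abs]
  have hLabs : L = |dl| := by rw [hLdef, hLc, Complex.norm_real, Real.norm_eq_abs]
  have hUL : U * L = du * dl := by
    rw [hUabs, hLabs, ← _root_.abs_mul, _root_.abs_of_pos hprod]
  have hdu0 : du ≠ 0 := by intro h0; rw [h0, zero_mul] at hprod; exact lt_irrefl 0 hprod
  have hdl0 : dl ≠ 0 := by intro h0; rw [h0, mul_zero] at hprod; exact lt_irrefl 0 hprod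
  have hU0 : 0 < U := by rw [hUabs]; exact _root_.abs_pos.mpr hdu0
  have hL0 : 0 < L := by rw [hLabs]; exact _root_.abs_pos.mpr hdl0
  have hud : ((u:ℝ):ℂ) ∈ S.disk a := S.mem_disk_ofReal humem
  have hld : ((l:ℝ):ℂ) ∈ S.disk a := S.mem_disk_ofReal hlmem
  have hXU : X ≤ K * U := hratio w a h z hz _ hud
  have hXL : X ≤ K * L := hratio w a h z hz _ hld
  have hUX : U ≤ K * X := hratio w a h _ hud z hz
  have hLX : L ≤ K * X := hratio w a h _ hld z hz
  have hdnorm : ‖dMob (S.g w) z‖ = (X^2)⁻¹ := by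
    rw [dMob, norm_pow, norm_inv, inv_pow, hX]
  have hρle : ρmin ≤ S.radius a := by
    rw [hρmindef]; exact Finset.inf'_le S.radius (Finset.mem_univ a)
  have hρge : S.radius a ≤ ρmax := by
    rw [hρmaxdef]; exact Finset.le_sup' S.radius (Finset.mem_univ a)
  rw [hdnorm, hwf, ← hUL]
  constructor
  · -- C⁻¹ * (2ρ/(U*L)) ≤ (X²)⁻¹
    have key1 : 2 * S.radius a * X^2 ≤ C * (U * L) := by
      have hXX : X * X ≤ (K*U) * (K*L) :=
        mul_le_mul hXU hXL hX0.le (mul_nonneg hK0.le hU0.le)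
      have hCge : K^2 * (2*ρmax) ≤ C := le_trans (le_max_left _ _) (le_max_left _ _)
      calc 2 * S.radius a * X^2 = (2 * S.radius a) * (X * X) := by ring
        _ ≤ (2 * ρmax) * ((K*U) * (K*L)) :=
            mul_le_mul (by linarith) hXX (mul_nonneg hX0.le hX0.le) (by linarith)
        _ = (K^2 * (2*ρmax)) * (U * L) := by ring
        _ ≤ C * (U * L) := mul_le_mul_of_nonneg_right hCge (mul_nonneg hU0.le hL0.le)
    rw [inv_mul_eq_div, div_div, inv_eq_one_div,
      div_le_div_iff₀ (by exact mul_pos (mul_pos hU0 hL0) hC0) (pow_pos hX0 2)]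
    nlinarith [key1]
  · -- (X²)⁻¹ ≤ C * (2ρ/(U*L))
    have key2 : U * L ≤ C * (2 * S.radius a) * X^2 := by
      have hULK : U * L ≤ (K*X) * (K*X) :=
        mul_le_mul hUX hLX hL0.le (mul_nonneg hK0.le hX0.le)
      have hCge : K^2 / (2*ρmin) ≤ C := le_trans (le_max_right _ _) (le_max_left _ _)
      have hK2C : K^2 ≤ C * (2*ρmin) := (div_le_iff₀ (by linarith)).mp hCge
      calc U * L ≤ (K*X) * (K*X) := hULK
        _ = K^2 * X^2 := by ring
        _ ≤ (C * (2*ρmin)) * X^2 := mul_le_mul_of_nonneg_right hK2C (sq_nonneg X)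
        _ ≤ C * (2 * S.radius a) * X^2 := by
            nlinarith [mul_nonneg (mul_nonneg hC0.le (sub_nonneg.mpr hρle)) (sq_nonneg X)]
    rw [← mul_div_assoc, inv_eq_one_div,
      div_le_div_iff₀ (pow_pos hX0 2) (mul_pos hU0 hL0)]
    nlinarith [key2]
end
end

section
/- Let Z be a partition and Z̄ := {ā : a ∈ Z}. Then for every s ∈ ℂ and every function u holomorphic on the interior of D, if L_s u = u on the interior of D, then L_{Z̄,s} u = u on the interior of D. -/
open Complex MeasureTheory Metric Set
open scoped Real

noncomputable section


namespace Stmt4Aux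

/-! ### Matrix / Möbius algebra -/

def den (g : SL2R) (z : ℂ) : ℂ := mC g * z + mD g

lemma dMob_eq (g : SL2R) (z : ℂ) : dMob g z = ((den g z)⁻¹) ^ 2 := rfl

lemma mA_mul (A B : SL2R) : mA (A * B) = mA A * mA B + mB A * mC B := by
  simp only [mA, mB, mC, Matrix.SpecialLinearGroup.coe_mul, Matrix.mul_apply, Fin.sum_univ_two]
  push_cast; ring

lemma mB_mul (A B : SL2R) : mB (A * B) = mA A * mB B + mB A * mD B := by
  simp only [mA, mB, mC, mD, Matrix.SpecialLinearGroup.coe_mul, Matrix.mul_apply, Fin.sum_univ_two]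
  push_cast; ring

lemma mC_mul (A B : SL2R) : mC (A * B) = mC A * mA B + mD A * mC B := by
  simp only [mA, mC, mD, Matrix.SpecialLinearGroup.coe_mul, Matrix.mul_apply, Fin.sum_univ_two]
  push_cast; ring

lemma mD_mul (A B : SL2R) : mD (A * B) = mC A * mB B + mD A * mD B := by
  simp only [mB, mC, mD, Matrix.SpecialLinearGroup.coe_mul, Matrix.mul_apply, Fin.sum_univ_two]
  push_cast; ring

lemma mA_one : mA (1 : SL2R) = 1 := by simp [mA, Matrix.SpecialLinearGroup.coe_one]
lemma mB_one : mB (1 : SL2R) = 0 := by simp [mB, Matrix.SpecialLinearGroup.coe_one]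
lemma mC_one : mC (1 : SL2R) = 0 := by simp [mC, Matrix.SpecialLinearGroup.coe_one]
lemma mD_one : mD (1 : SL2R) = 1 := by simp [mD, Matrix.SpecialLinearGroup.coe_one]

lemma den_one (z : ℂ) : den 1 z = 1 := by simp [den, mC_one, mD_one]

lemma moebiusC_one (z : ℂ) : moebiusC 1 z = z := by
  simp [moebiusC, mA_one, mB_one, mC_one, mD_one]

lemma den_mul (A B : SL2R) (z : ℂ) (hB : den B z ≠ 0) :
    den (A * B) z = den A (moebiusC B z) * den B z := by
  simp only [den, moebiusC] at *
  rw [add_mul, mul_assoc, div_mul_cancel₀ _ hB, mC_mul, mD_mul]; ring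

lemma moebiusC_mul (A B : SL2R) (z : ℂ) (hB : den B z ≠ 0)
    (hA : den A (moebiusC B z) ≠ 0) :
    moebiusC (A * B) z = moebiusC A (moebiusC B z) := by
  have hAB : den (A * B) z ≠ 0 := by
    rw [den_mul A B z hB]; exact mul_ne_zero hA hB
  simp only [den, moebiusC] at *
  rw [div_eq_div_iff hAB hA]
  · rw [mA_mul, mB_mul, mC_mul, mD_mul] at *
    field_simp at *
    ring

/-! ### The involution `bar` -/

lemma bar_bar {r : ℕ} (a : Fin (2 * r)) : bar (bar a) = a := by
  have ha := a.isLt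
  rcases lt_or_ge (a : ℕ) r with h | h
  · have : ¬ ((a : ℕ) + r < r) := by omega
    simp only [bar, h, dif_pos, this, dif_neg, not_false_iff]
    exact Fin.ext (by simp)
  · have h' : ¬ ((a : ℕ) < r) := by omega
    have : (a : ℕ) - r < r := by omega
    simp only [bar, h', dif_neg, not_false_iff, this, dif_pos]
    exact Fin.ext (by simp; omega)

lemma bar_inj {r : ℕ} {a b : Fin (2 * r)} (h : bar a = bar b) : a = b := by
  have := congrArg bar h; rwa [bar_bar, bar_bar] at this

lemma ne_bar_symm {r : ℕ} {a b : Fin (2 * r)} (h : a ≠ bar b) : b ≠ bar a := by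
  intro hb; exact h (by rw [hb, bar_bar])

/-! ### Inverses -/

lemma den_inv_ne (g : SL2R) (z : ℂ) (hz : den g z ≠ 0) :
    den g⁻¹ (moebiusC g z) ≠ 0 ∧ moebiusC g⁻¹ (moebiusC g z) = z := by
  have h1 : den (g⁻¹ * g) z = den g⁻¹ (moebiusC g z) * den g z := den_mul _ _ _ hz
  rw [inv_mul_cancel, den_one] at h1
  have h2 : den g⁻¹ (moebiusC g z) ≠ 0 := left_ne_zero_of_mul_eq_one h1.symm
  refine ⟨h2, ?_⟩
  have := moebiusC_mul g⁻¹ g z hz h2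
  rw [inv_mul_cancel, moebiusC_one] at this
  exact this.symm

/-! ### Möbius on the sphere vs on ℂ -/

lemma moebius_coe (g : SL2R) (z : ℂ) :
    moebius g (z : OnePoint ℂ) = if mC g * z + mD g = 0 then OnePoint.infty
      else ((moebiusC g z : ℂ) : OnePoint ℂ) := rfl

/-! ### Geometry: letters map disks into disks -/

variable {r : ℕ}

lemma geom_closed (S : Schottky r) {a b : Fin (2 * r)} (hab : a ≠ bar b)
    {z : ℂ} (hz : z ∈ S.disk b) :
    den (S.γ a) z ≠ 0 ∧ moebiusC (S.γ a) z ∈ S.disk a := by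
  have hba : b ≠ bar a := ne_bar_symm hab
  have hdisj : Disjoint (S.disk b) (S.disk (bar a)) := S.disj hba
  have hznot : z ∉ interior (closedBall ((S.center (bar a) : ℝ) : ℂ) (S.radius (bar a))) := by
    intro hzin
    exact (Set.disjoint_left.1 hdisj hz) (interior_subset hzin)
  have hmem : (z : OnePoint ℂ) ∈
      (Set.univ \ ((fun w : ℂ => (w : OnePoint ℂ)) ''
        interior (closedBall ((S.center (bar a) : ℝ) : ℂ) (S.radius (bar a))))) := by
    refine ⟨trivial, ?_⟩
    rintro ⟨w, hw, hwz⟩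
    rw [OnePoint.coe_eq_coe] at hwz
    exact hznot (hwz ▸ hw)
  have himg : moebius (S.γ a) (z : OnePoint ℂ) ∈
      (fun w : ℂ => (w : OnePoint ℂ)) '' closedBall ((S.center a : ℝ) : ℂ) (S.radius a) := by
    rw [← S.γ_maps a]; exact ⟨_, hmem, rfl⟩
  rw [moebius_coe] at himg
  by_cases hden : mC (S.γ a) * z + mD (S.γ a) = 0
  · rw [if_pos hden] at himg
    obtain ⟨w, _, hw⟩ := himg
    exact absurd hw (OnePoint.coe_ne_infty w)
  · rw [if_neg hden] at himg
    obtain ⟨w, hwmem, hw⟩ := himg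
    rw [OnePoint.coe_eq_coe] at hw
    exact ⟨hden, hw ▸ hwmem⟩

lemma den_continuous (g : SL2R) : Continuous (den g) := by
  unfold den; fun_prop

lemma moebiusC_contOn (g : SL2R) {U : Set ℂ} (hU : ∀ z ∈ U, den g z ≠ 0) :
    ContinuousOn (moebiusC g) U := by
  apply ContinuousOn.div (by fun_prop) ((den_continuous g).continuousOn)
  exact hU

lemma geom_interior (S : Schottky r) {a b : Fin (2 * r)} (hab : a ≠ bar b)
    {z : ℂ} (hz : z ∈ interior (S.disk b)) :
    moebiusC (S.γ a) z ∈ interior (S.disk a) := by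
  obtain ⟨hden, hmem⟩ := geom_closed S hab (interior_subset hz)
  obtain ⟨hdi, hinv⟩ := den_inv_ne (S.γ a) z hden
  set V : Set ℂ := {y | den (S.γ a)⁻¹ y ≠ 0} ∩ (moebiusC (S.γ a)⁻¹) ⁻¹' (interior (S.disk b))
    with hV
  have hVopen : IsOpen V := by
    apply ContinuousOn.isOpen_inter_preimage
    · exact moebiusC_contOn _ (fun y hy => hy)
    · have : {y : ℂ | den (S.γ a)⁻¹ y ≠ 0} = (den (S.γ a)⁻¹) ⁻¹' ({0}ᶜ) := rfl
      rw [this]; exact (isOpen_compl_singleton).preimage (den_continuous _)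
    · exact isOpen_interior
  have hyV : moebiusC (S.γ a) z ∈ V := ⟨hdi, by simp only [Set.mem_preimage, hinv]; exact hz⟩
  have hVsub : V ⊆ S.disk a := by
    rintro y' ⟨hd', hz'⟩
    set z' := moebiusC (S.γ a)⁻¹ y' with hz'def
    have hz'mem : z' ∈ S.disk b := interior_subset hz'
    obtain ⟨hdz', hmem'⟩ := geom_closed S hab hz'mem
    obtain ⟨_, hfwd⟩ := den_inv_ne (S.γ a)⁻¹ y' hd'
    rw [inv_inv] at hfwd
    -- hfwd : moebiusC (S.γ a) (moebiusC (S.γ a)⁻¹ y') = y'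
    rw [← hz'def] at hfwd
    rw [← hfwd]
    exact hmem'
  exact mem_interior.2 ⟨V, hVsub, hVopen, hyV⟩

/-! ### Orbits and accumulated logarithms along words -/

def pt (S : Schottky r) : List (Fin (2 * r)) → ℂ → ℂ
  | [], z => z
  | a :: t, z => pt S t (moebiusC (S.γ a) z)

def lam (S : Schottky r) (ℓ : Fin (2 * r) → Fin (2 * r) → ℂ → ℂ) :
    Fin (2 * r) → List (Fin (2 * r)) → ℂ → ℂ
  | _, [], _ => 0
  | b, a :: t, z => ℓ a b z + lam S ℓ a t (moebiusC (S.γ a) z)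

lemma g_nil (S : Schottky r) : S.g [] = 1 := rfl

lemma g_concat (S : Schottky r) (l : List (Fin (2 * r))) (a : Fin (2 * r)) :
    S.g (l ++ [a]) = S.g l * S.γ a := by
  simp [Schottky.g, List.map_append]

local notation "Rel" => (fun x y : Fin (2 * r) => y ≠ bar x)

lemma chain_main (S : Schottky r) (ℓ : Fin (2 * r) → Fin (2 * r) → ℂ → ℂ)
    (hℓ : IsBranchFamily S ℓ) :
    ∀ (c : List (Fin (2 * r))) (b : Fin (2 * r)) (z : ℂ),
      List.Chain Rel b c → z ∈ S.disk b →
      den (S.g c.reverse) z ≠ 0 ∧ moebiusC (S.g c.reverse) z = pt S c z ∧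
      pt S c z ∈ S.disk ((b :: c).getLast (List.cons_ne_nil _ _)) ∧
      Complex.exp (lam S ℓ b c z) = dMob (S.g c.reverse) z := by
  intro c
  induction c with
  | nil =>
    intro b z _ hz
    refine ⟨?_, ?_, ?_, ?_⟩
    · rw [List.reverse_nil, g_nil, den_one]; exact one_ne_zero
    · rw [List.reverse_nil, g_nil, moebiusC_one]; rfl
    · simpa [pt] using hz
    · simp [lam, List.reverse_nil, g_nil, dMob_eq, den_one]
  | cons a t ih =>
    intro b z hchain hz
    rw [List.Chain, List.chain_cons] at hchain
    obtain ⟨ha, hchain'⟩ := hchain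
    obtain ⟨hden, hmem⟩ := geom_closed S ha hz
    set z₁ := moebiusC (S.γ a) z with hz₁
    obtain ⟨h1, h2, h3, h4⟩ := ih a z₁ hchain' hmem
    have hgrev : S.g ((a :: t).reverse) = S.g t.reverse * S.γ a := by
      rw [List.reverse_cons, g_concat]
    have hdenmul : den (S.g ((a :: t).reverse)) z = den (S.g t.reverse) z₁ * den (S.γ a) z := by
      rw [hgrev, den_mul _ _ _ hden]
    refine ⟨?_, ?_, ?_, ?_⟩
    · rw [hdenmul]; exact mul_ne_zero h1 hden
    · rw [hgrev, moebiusC_mul _ _ _ hden h1]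
      exact h2
    · have : ((b :: a :: t).getLast (List.cons_ne_nil _ _))
          = ((a :: t).getLast (List.cons_ne_nil _ _)) := List.getLast_cons _
      rw [this]
      exact h3
    · have hexp : Complex.exp (ℓ a b z) = dMob (S.γ a) z :=
        (hℓ a b ha).exp_eq z hz
      show Complex.exp (ℓ a b z + lam S ℓ a t z₁) = _
      rw [Complex.exp_add, hexp, h4, dMob_eq, dMob_eq, dMob_eq, hdenmul]
      rw [mul_inv, mul_pow]
      ring

lemma chain_interior (S : Schottky r) :
    ∀ (c : List (Fin (2 * r))) (b : Fin (2 * r)) (z : ℂ),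
      List.Chain Rel b c → z ∈ interior (S.disk b) →
      pt S c z ∈ interior (S.disk ((b :: c).getLast (List.cons_ne_nil _ _))) := by
  intro c
  induction c with
  | nil => intro b z _ hz; simpa [pt] using hz
  | cons a t ih =>
    intro b z hchain hz
    rw [List.Chain, List.chain_cons] at hchain
    obtain ⟨ha, hchain'⟩ := hchain
    have h1 : moebiusC (S.γ a) z ∈ interior (S.disk a) := geom_interior S ha hz
    have : ((b :: a :: t).getLast (List.cons_ne_nil _ _))
        = ((a :: t).getLast (List.cons_ne_nil _ _)) := List.getLast_cons _
    rw [this]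
    exact ih a _ hchain' h1

lemma lam_contOn (S : Schottky r) (ℓ : Fin (2 * r) → Fin (2 * r) → ℂ → ℂ)
    (hℓ : IsBranchFamily S ℓ) :
    ∀ (c : List (Fin (2 * r))) (b : Fin (2 * r)),
      List.Chain Rel b c → ContinuousOn (lam S ℓ b c) (S.disk b) := by
  intro c
  induction c with
  | nil => intro b _; simpa [lam] using continuousOn_const
  | cons a t ih =>
    intro b hchain
    rw [List.Chain, List.chain_cons] at hchain
    obtain ⟨ha, hchain'⟩ := hchain
    show ContinuousOn (fun z => ℓ a b z + lam S ℓ a t (moebiusC (S.γ a) z)) _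
    apply ContinuousOn.add
    · exact (hℓ a b ha).holo.continuousOn
    · apply ContinuousOn.comp (ih a hchain')
      · exact moebiusC_contOn _ (fun z hz => (geom_closed S ha hz).1)
      · exact fun z hz => (geom_closed S ha hz).2

lemma moebiusC_real (g : SL2R) (x : ℝ) :
    moebiusC g ((x : ℝ) : ℂ) = ((moebiusR g x : ℝ) : ℂ) := by
  simp only [moebiusC, moebiusR, mA, mB, mC, mD]
  push_cast
  rfl

lemma lam_real (S : Schottky r) (ℓ : Fin (2 * r) → Fin (2 * r) → ℂ → ℂ)
    (hℓ : IsBranchFamily S ℓ) :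
    ∀ (c : List (Fin (2 * r))) (b : Fin (2 * r)) (x : ℝ),
      List.Chain Rel b c → ((x : ℝ) : ℂ) ∈ S.disk b → (lam S ℓ b c ((x : ℝ) : ℂ)).im = 0 := by
  intro c
  induction c with
  | nil => intro b x _ _; simp [lam]
  | cons a t ih =>
    intro b x hchain hx
    rw [List.Chain, List.chain_cons] at hchain
    obtain ⟨ha, hchain'⟩ := hchain
    show (ℓ a b _ + lam S ℓ a t (moebiusC (S.γ a) _)).im = 0
    rw [Complex.add_im, (hℓ a b ha).real_on x hx, zero_add, moebiusC_real]
    apply ih a _ hchain'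
    rw [← moebiusC_real]
    exact (geom_closed S ha hx).2

/-! ### Uniqueness of branches of the logarithm -/

lemma branch_eq {U : Set ℂ} (hU : IsPreconnected U) {f h : ℂ → ℂ}
    (hf : ContinuousOn f U) (hh : ContinuousOn h U)
    (hexp : ∀ z ∈ U, Complex.exp (f z) = Complex.exp (h z))
    {x₀ : ℂ} (hx₀ : x₀ ∈ U) (hf0 : (f x₀).im = 0) (hh0 : (h x₀).im = 0) :
    ∀ z ∈ U, f z = h z := by
  have key : ∀ z ∈ U, ∃ n : ℤ, f z - h z = n * (2 * (Real.pi : ℂ) * Complex.I) := by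
    intro z hz
    rw [← Complex.exp_eq_one_iff, Complex.exp_sub, hexp z hz,
      div_self (Complex.exp_ne_zero _)]
  set q : ℂ → ℝ := fun z => (f z - h z).im with hq
  have hqc : ContinuousOn q U := Complex.continuous_im.comp_continuousOn (hf.sub hh)
  have hqval : ∀ z ∈ U, ∃ n : ℤ, q z = n * (2 * Real.pi) := by
    intro z hz
    obtain ⟨n, hn⟩ := key z hz
    refine ⟨n, ?_⟩
    rw [hq]; simp only [hn]
    simp [Complex.mul_im, Complex.mul_re]
  have hq0 : q x₀ = 0 := by simp [hq, Complex.sub_im, hf0, hh0]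
  have hT : IsPreconnected (q '' U) := hU.image q hqc
  have hTo : (q '' U).OrdConnected := hT.ordConnected
  have hqzero : ∀ z ∈ U, q z = 0 := by
    intro z hz
    obtain ⟨n, hn⟩ := hqval z hz
    rcases lt_trichotomy n 0 with hneg | hzero | hpos
    · exfalso
      have h1 : q z ≤ -(2 * Real.pi) := by
        rw [hn]
        have : (n : ℝ) ≤ -1 := by exact_mod_cast (by omega : n ≤ -1)
        nlinarith [Real.pi_pos]
      have hmem : (-Real.pi) ∈ q '' U := by
        apply hTo.out (Set.mem_image_of_mem q hz) (hq0 ▸ Set.mem_image_of_mem q hx₀)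
        constructor
        · linarith [Real.pi_pos]
        · linarith [Real.pi_pos]
      obtain ⟨z', hz', hz'eq⟩ := hmem
      obtain ⟨m, hm⟩ := hqval z' hz'
      rw [hz'eq] at hm
      have : (2 * m + 1 : ℝ) = 0 := by nlinarith [Real.pi_pos]
      have : (2 * m + 1 : ℤ) = 0 := by exact_mod_cast this
      omega
    · rw [hn, hzero]; simp
    · exfalso
      have h1 : 2 * Real.pi ≤ q z := by
        rw [hn]
        have : (1 : ℝ) ≤ (n : ℝ) := by exact_mod_cast hpos
        nlinarith [Real.pi_pos]
      have hmem : (Real.pi) ∈ q '' U := by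
        apply hTo.out (hq0 ▸ Set.mem_image_of_mem q hx₀) (Set.mem_image_of_mem q hz)
        constructor
        · linarith [Real.pi_pos]
        · linarith [Real.pi_pos]
      obtain ⟨z', hz', hz'eq⟩ := hmem
      obtain ⟨m, hm⟩ := hqval z' hz'
      rw [hz'eq] at hm
      have : (2 * m - 1 : ℝ) = 0 := by nlinarith [Real.pi_pos]
      have : (2 * m - 1 : ℤ) = 0 := by exact_mod_cast this
      omega
  intro z hz
  obtain ⟨n, hn⟩ := key z hz
  have him : (f z - h z).im = 0 := hqzero z hz
  rw [hn] at him
  have : (n : ℝ) * (2 * Real.pi) = 0 := by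
    simpa [Complex.mul_im, Complex.mul_re] using him
  have hn0 : (n : ℝ) = 0 := by
    rcases mul_eq_zero.1 this with h' | h'
    · exact h'
    · exfalso; nlinarith [Real.pi_pos]
  have : n = 0 := by exact_mod_cast hn0
  rw [this] at hn
  simpa [sub_eq_zero] using hn

/-! ### Word combinatorics -/

lemma chain_isword {b : Fin (2 * r)} {c : List (Fin (2 * r))}
    (h : List.Chain Rel b c) : IsWord (bar b :: c.map bar) := by
  show List.IsChain Rel ((b :: c).map bar)
  rw [List.isChain_map bar]
  refine List.IsChain.imp ?_ h
  intro x y hxy hcon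
  exact hxy (bar_inj (by rw [hcon, bar_bar]))

lemma pt_snoc (S : Schottky r) :
    ∀ (c : List (Fin (2 * r))) (a : Fin (2 * r)) (z : ℂ),
      pt S (c ++ [a]) z = moebiusC (S.γ a) (pt S c z) := by
  intro c
  induction c with
  | nil => intro a z; rfl
  | cons x t ih => intro a z; show pt S (t ++ [a]) _ = _; rw [ih]; rfl

lemma lam_snoc (S : Schottky r) (ℓ : Fin (2 * r) → Fin (2 * r) → ℂ → ℂ) :
    ∀ (c : List (Fin (2 * r))) (b a : Fin (2 * r)) (z : ℂ),
      lam S ℓ b (c ++ [a]) z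
        = lam S ℓ b c z + ℓ a ((b :: c).getLast (List.cons_ne_nil _ _)) (pt S c z) := by
  intro c
  induction c with
  | nil => intro b a z; show ℓ a b z + 0 = 0 + ℓ a b z; ring
  | cons x t ih =>
    intro b a z
    show ℓ x b z + lam S ℓ x (t ++ [a]) _ = (ℓ x b z + lam S ℓ x t _) + _
    rw [ih]
    rw [List.getLast_cons (List.cons_ne_nil _ _)]
    show _ = _ + ℓ a _ (pt S (x :: t) z)
    rw [add_assoc]
    rfl

lemma chain_snoc :
    ∀ (c : List (Fin (2 * r))) (b a : Fin (2 * r)),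
      List.Chain Rel b c → a ≠ bar ((b :: c).getLast (List.cons_ne_nil _ _)) →
      List.Chain Rel b (c ++ [a]) := by
  intro c
  induction c with
  | nil => intro b a _ ha; exact List.Chain.cons (by simpa using ha) List.Chain.nil
  | cons x t ih =>
    intro b a hchain ha
    rw [List.Chain, List.chain_cons] at hchain
    refine List.Chain.cons hchain.1 (ih x a hchain.2 ?_)
    rwa [List.getLast_cons (List.cons_ne_nil _ _)] at ha

lemma getLast?_map_bar :
    ∀ (l : List (Fin (2 * r))) (h : l ≠ []), (l.map bar).getLast? = some (bar (l.getLast h))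
  | [x], _ => by simp
  | x :: y :: t, _ => by
    have ih := getLast?_map_bar (y :: t) (List.cons_ne_nil _ _)
    simp only [List.map_cons] at ih ⊢
    rw [List.getLast?_cons_cons, ih, List.getLast_cons (List.cons_ne_nil _ _)]

lemma getLast?_W {b : Fin (2 * r)} {c : List (Fin (2 * r))} :
    (bar b :: c.map bar).getLast? = some (bar ((b :: c).getLast (List.cons_ne_nil _ _))) := by
  have : bar b :: c.map bar = (b :: c).map bar := rfl
  rw [this, getLast?_map_bar (b :: c) (List.cons_ne_nil _ _)]

lemma exists_snoc_word (hr : 1 ≤ r) (w : List (Fin (2 * r))) (hw : IsWord w) :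
    ∃ y, IsWord (w ++ [y]) := by
  rcases List.eq_nil_or_concat w with rfl | ⟨l, x, rfl⟩
  · refine ⟨⟨0, by omega⟩, ?_⟩
    show List.Chain Rel _ []
    exact List.Chain.nil
  · rw [List.concat_eq_append] at hw ⊢
    have hcard : 1 < Fintype.card (Fin (2 * r)) := by simp; omega
    obtain ⟨y, hy⟩ := Fintype.exists_ne_of_one_lt_card hcard (bar ((l ++ [x]).getLast (by simp)))
    refine ⟨y, ?_⟩
    show List.Chain' (fun p q => q ≠ bar p) ((l ++ [x]) ++ [y])
    rw [List.Chain', List.isChain_append]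
    refine ⟨hw, List.isChain_singleton y, ?_⟩
    intro p hp q hq
    rw [List.getLast?_eq_getLast (by simp)] at hp
    simp at hp hq
    subst hp; subst hq
    simpa using hy

lemma exists_ext_word (hr : 1 ≤ r) (w : List (Fin (2 * r))) (hw : IsWord w) (n : ℕ) :
    ∃ w', IsWord w' ∧ w <+: w' ∧ n ≤ w'.length := by
  induction n with
  | zero => exact ⟨w, hw, List.prefix_refl w, Nat.zero_le _⟩
  | succ n ihn =>
    obtain ⟨w', hw', hpre, hlen⟩ := ihn
    rcases Nat.lt_or_ge n w'.length with h | h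
    · exact ⟨w', hw', hpre, h⟩
    · obtain ⟨y, hy⟩ := exists_snoc_word hr w' hw'
      exact ⟨w' ++ [y], hy, hpre.trans ⟨[y], rfl⟩, by simp; omega⟩

lemma prefix_snoc {α : Type*} {p w : List α} {x : α} (h : p <+: w ++ [x]) :
    p <+: w ∨ p = w ++ [x] := by
  rcases Nat.lt_or_ge w.length p.length with hl | hl
  · right
    apply h.eq_of_length
    have := h.length_le
    simp at this ⊢
    omega
  · left
    exact List.prefix_of_prefix_length_le h ⟨[x], rfl⟩ hl

lemma single_prefix {α : Type*} {x : α} {l : List α} : [x] <+: l ↔ l.head? = some x := by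
  cases l with
  | nil => simp
  | cons y t =>
    constructor
    · rintro ⟨tt, htt⟩
      simp at htt
      simp [htt.1]
    · intro hy
      simp at hy
      exact ⟨t, by rw [hy]; rfl⟩

/-! ### Matching refined terms with accumulated data -/

lemma match_term (S : Schottky r) (Z : Finset (List (Fin (2 * r))))
    (s : ℂ) (ℓ : Fin (2 * r) → Fin (2 * r) → ℂ → ℂ) (hℓ : IsBranchFamily S ℓ)
    (ℓ' : List (Fin (2 * r)) → ℂ → ℂ)
    (hℓ' : ∀ w ∈ Z, ∀ b : Fin (2 * r), (barWord w).getLast? = some b →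
      IsLogBranch (S.g ((barWord w).dropLast)) (S.disk b) (ℓ' w))
    (u : ℂ → ℂ) (c : List (Fin (2 * r))) (b : Fin (2 * r))
    (hchain : List.Chain Rel b c) (hZc : (bar b :: c.map bar) ∈ Z) :
    ∀ z ∈ S.disk b,
      Complex.exp (s * ℓ' (bar b :: c.map bar) z)
          * u (moebiusC (S.g ((barWord (bar b :: c.map bar)).dropLast)) z)
        = Complex.exp (s * lam S ℓ b c z) * u (pt S c z) := by
  have hbw : barWord (bar b :: c.map bar) = c.reverse ++ [b] := by
    simp [barWord, List.map_map, Function.comp_def, bar_bar]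
  have hlast : (barWord (bar b :: c.map bar)).getLast? = some b := by
    rw [hbw, List.getLast?_concat]
  have hdrop : (barWord (bar b :: c.map bar)).dropLast = c.reverse := by
    rw [hbw, List.dropLast_concat]
  have hbr := hℓ' _ hZc b hlast
  rw [hdrop] at hbr
  have hpc : IsPreconnected (S.disk b) := (convex_closedBall _ _).isPreconnected
  have hcenter : ((S.center b : ℝ) : ℂ) ∈ S.disk b :=
    Metric.mem_closedBall_self (S.radius_pos b).le
  have heq : ∀ z ∈ S.disk b, ℓ' (bar b :: c.map bar) z = lam S ℓ b c z := by
    apply branch_eq hpc hbr.holo.continuousOn (lam_contOn S ℓ hℓ c b hchain) ?_ hcenter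
      (hbr.real_on _ hcenter) (lam_real S ℓ hℓ c b _ hchain hcenter)
    intro z hz
    rw [hbr.exp_eq z hz, (chain_main S ℓ hℓ c b z hchain hz).2.2.2]
  intro z hz
  rw [heq z hz, hdrop, (chain_main S ℓ hℓ c b z hchain hz).2.1]

lemma Z_nested (S : Schottky r) (Z : Finset (List (Fin (2 * r))))
    (hZ1 : ∀ w ∈ Z, w ≠ [] ∧ IsWord w) (N : ℕ)
    (hN : ∀ w, IsWord w → N ≤ w.length → ∃! p, p ∈ Z ∧ p <+: w)
    {p q : List (Fin (2 * r))} (hp : p ∈ Z) (hq : q ∈ Z) (hpq : p <+: q) : p = q := by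
  obtain ⟨w, hw, hqw, hlen⟩ := exists_ext_word S.hr q (hZ1 q hq).2 N
  obtain ⟨p₀, -, huniq⟩ := hN w hw hlen
  rw [huniq p ⟨hp, hpq.trans hqw⟩, huniq q ⟨hq, hqw⟩]

/-! ### The main induction -/

lemma main_ind (S : Schottky r) (Z : Finset (List (Fin (2 * r))))
    (hZ1 : ∀ w ∈ Z, w ≠ [] ∧ IsWord w) (N : ℕ)
    (hN : ∀ w, IsWord w → N ≤ w.length → ∃! p, p ∈ Z ∧ p <+: w)
    (s : ℂ) (ℓ : Fin (2 * r) → Fin (2 * r) → ℂ → ℂ) (hℓ : IsBranchFamily S ℓ)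
    (ℓ' : List (Fin (2 * r)) → ℂ → ℂ)
    (hℓ' : ∀ w ∈ Z, ∀ b : Fin (2 * r), (barWord w).getLast? = some b →
      IsLogBranch (S.g ((barWord w).dropLast)) (S.disk b) (ℓ' w))
    (u : ℂ → ℂ) (hfix : TransferFixed S s ℓ u) :
    ∀ (m : ℕ) (c : List (Fin (2 * r))) (b : Fin (2 * r)),
      List.Chain Rel b c → N ≤ c.length + 1 + m →
      (∀ p ∈ Z, ¬ p <+: (bar b :: c.map bar)) →
      ∀ z ∈ interior (S.disk b),
      Complex.exp (s * lam S ℓ b c z) * u (pt S c z)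
        = ∑ p ∈ Z, if (bar b :: c.map bar) <+: p
            then Complex.exp (s * ℓ' p z) * u (moebiusC (S.g ((barWord p).dropLast)) z)
            else 0 := by
  intro m
  induction m with
  | zero =>
    intro c b hchain hbud hnopre z hz
    exfalso
    obtain ⟨p, ⟨hpZ, hppre⟩, -⟩ := hN _ (chain_isword hchain) (by simp; omega)
    exact hnopre p hpZ hppre
  | succ m ih =>
    intro c b hchain hbud hnopre z hz
    have hzk : pt S c z ∈ interior (S.disk ((b :: c).getLast (List.cons_ne_nil _ _))) :=
      chain_interior S c b z hchain hz
    set L := (b :: c).getLast (List.cons_ne_nil _ _) with hL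
    set F : List (Fin (2 * r)) → ℂ := fun p =>
      Complex.exp (s * ℓ' p z) * u (moebiusC (S.g ((barWord p).dropLast)) z) with hF
    have hfixL := hfix L (pt S c z) hzk
    have step1 : Complex.exp (s * lam S ℓ b c z) * u (pt S c z)
        = ∑ a : Fin (2 * r), if a ≠ bar L
            then Complex.exp (s * lam S ℓ b (c ++ [a]) z) * u (pt S (c ++ [a]) z) else 0 := by
      rw [hfixL, Finset.mul_sum]
      apply Finset.sum_congr rfl
      intro a _
      by_cases ha : a ≠ bar L
      · rw [if_pos ha, if_pos ha, lam_snoc, pt_snoc, ← hL, mul_add, Complex.exp_add]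
        ring
      · rw [if_neg ha, if_neg ha, mul_zero]
    have step2 : ∀ a : Fin (2 * r), a ≠ bar L →
        Complex.exp (s * lam S ℓ b (c ++ [a]) z) * u (pt S (c ++ [a]) z)
        = ∑ p ∈ Z, if ((bar b :: c.map bar) ++ [bar a]) <+: p then F p else 0 := by
      intro a ha
      have hchain' : List.Chain Rel b (c ++ [a]) := chain_snoc c b a hchain (hL ▸ ha)
      have hWmap : bar b :: (c ++ [a]).map bar = (bar b :: c.map bar) ++ [bar a] := by simp
      by_cases hcZ : (bar b :: (c ++ [a]).map bar) ∈ Z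
      · rw [← hWmap, Finset.sum_eq_single (bar b :: (c ++ [a]).map bar)]
        · rw [if_pos (List.prefix_refl _)]
          exact (match_term S Z s ℓ hℓ ℓ' hℓ' u (c ++ [a]) b hchain' hcZ z
            (interior_subset hz)).symm
        · intro q hqZ hqne
          rw [if_neg]
          intro hpre
          exact hqne (Z_nested S Z hZ1 N hN hcZ hqZ hpre).symm
        · intro hne; exact absurd hcZ hne
      · rw [← hWmap]
        refine (ih (c ++ [a]) b hchain' (by simp; omega) ?_ z hz).trans ?_
        · intro p hpZ hppre
          rw [hWmap] at hppre
          rcases prefix_snoc hppre with h | h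
          · exact hnopre p hpZ h
          · rw [← hWmap] at h; exact hcZ (h ▸ hpZ)
        · rfl
    rw [step1]
    calc (∑ a : Fin (2 * r), if a ≠ bar L
            then Complex.exp (s * lam S ℓ b (c ++ [a]) z) * u (pt S (c ++ [a]) z) else 0)
        = ∑ a : Fin (2 * r), ∑ p ∈ Z,
            (if a ≠ bar L then
              (if ((bar b :: c.map bar) ++ [bar a]) <+: p then F p else 0) else 0) := by
          apply Finset.sum_congr rfl
          intro a _
          by_cases ha : a ≠ bar L
          · simp only [if_pos ha]
            exact step2 a ha
          · simp only [if_neg ha, Finset.sum_const_zero]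
      _ = ∑ p ∈ Z, ∑ a : Fin (2 * r),
            (if a ≠ bar L then
              (if ((bar b :: c.map bar) ++ [bar a]) <+: p then F p else 0) else 0) :=
          Finset.sum_comm
      _ = ∑ p ∈ Z, if (bar b :: c.map bar) <+: p then F p else 0 := by
          apply Finset.sum_congr rfl
          intro p hpZ
          by_cases hWp : (bar b :: c.map bar) <+: p
          · rw [if_pos hWp]
            have hpne : p ≠ bar b :: c.map bar := fun h =>
              hnopre p hpZ (h ▸ List.prefix_refl _)
            obtain ⟨t, ht⟩ := hWp
            cases t with
            | nil => exact absurd (by rw [← ht]; simp) hpne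
            | cons y rest =>
              have hlastW : (bar b :: c.map bar).getLast? = some (bar L) := by
                rw [getLast?_W, hL]
              have hyL : y ≠ L := by
                have hword : List.Chain' (fun x y => y ≠ bar x) p := (hZ1 p hpZ).2
                rw [← ht, List.Chain', List.isChain_append] at hword
                have h5 := hword.2.2 (bar L) hlastW y rfl
                intro hyL'
                exact h5 (by rw [hyL', bar_bar])
              have hpre2 : (bar b :: c.map bar) ++ [y] <+: p :=
                ⟨rest, by rw [← ht]; simp⟩
              rw [Finset.sum_eq_single (bar y)]
              · have hbyL : bar y ≠ bar L := fun h => hyL (bar_inj h)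
                rw [if_pos hbyL, if_pos (by rwa [bar_bar])]
              · intro a _ hane
                by_cases haL : a ≠ bar L
                · rw [if_pos haL, if_neg]
                  intro hp2
                  have h1 : (bar b :: c.map bar) ++ [bar a] <+: (bar b :: c.map bar) ++ [y] :=
                    List.prefix_of_prefix_length_le hp2 hpre2 (by simp)
                  have h2 := h1.eq_of_length (by simp)
                  have h3 : bar a = y := by simpa using h2
                  exact hane (by rw [← h3, bar_bar])
                · rw [if_neg haL]
              · intro hnu; exact absurd (Finset.mem_univ _) hnu
          · rw [if_neg hWp]
            apply Finset.sum_eq_zero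
            intro a _
            by_cases haL : a ≠ bar L
            · rw [if_pos haL, if_neg]
              intro hp2
              exact hWp ((List.prefix_append _ _).trans hp2)
            · rw [if_neg haL]

end Stmt4Aux

/-- If `Z` is a partition and `L_s u = u` on the interior of `D`, then
`L_{Z̄,s} u = u` on the interior of `D`, where `Z̄ = {ā : a ∈ Z}`. -/
theorem stmt4 {r : ℕ} (S : Schottky r) (Z : Finset (List (Fin (2 * r))))
    (hZ : IsPartition S Z) (s : ℂ)
    (ℓ : Fin (2 * r) → Fin (2 * r) → ℂ → ℂ) (hℓ : IsBranchFamily S ℓ)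
    (ℓ' : List (Fin (2 * r)) → ℂ → ℂ)
    (hℓ' : ∀ w ∈ Z, ∀ b : Fin (2 * r), (barWord w).getLast? = some b →
      IsLogBranch (S.g ((barWord w).dropLast)) (S.disk b) (ℓ' w))
    (u : ℂ → ℂ) (hu : DifferentiableOn ℂ u (interior S.D))
    (hfix : TransferFixed S s ℓ u) :
    ∀ b : Fin (2 * r), ∀ z ∈ interior (S.disk b),
      u z = ∑ w ∈ Z, if (barWord w).getLast? = some b then
        Complex.exp (s * ℓ' w z) * u (moebiusC (S.g ((barWord w).dropLast)) z) else 0 := by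
  intro b z hz
  obtain ⟨hZ1, N, hN⟩ := hZ
  have hconv : ∀ p ∈ Z, (((barWord p).getLast? = some b) ↔ ([bar b] <+: p)) := by
    intro p hp
    obtain ⟨hpne, -⟩ := hZ1 p hp
    rw [Stmt4Aux.single_prefix]
    rw [barWord, List.getLast?_reverse, List.head?_map]
    cases p with
    | nil => exact absurd rfl hpne
    | cons x t =>
      simp only [List.head?_cons, Option.map_some, Option.some.injEq]
      constructor
      · intro h; rw [← h, Stmt4Aux.bar_bar]
      · intro h; rw [h, Stmt4Aux.bar_bar]
  have hsum : (∑ w ∈ Z, if (barWord w).getLast? = some b then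
        Complex.exp (s * ℓ' w z) * u (moebiusC (S.g ((barWord w).dropLast)) z) else 0)
      = ∑ w ∈ Z, if [bar b] <+: w then
        Complex.exp (s * ℓ' w z) * u (moebiusC (S.g ((barWord w).dropLast)) z) else 0 := by
    apply Finset.sum_congr rfl
    intro p hp
    exact if_congr (hconv p hp) rfl rfl
  rw [hsum]
  by_cases hmem : [bar b] ∈ Z
  · rw [Finset.sum_eq_single [bar b]]
    · rw [if_pos (List.prefix_refl _)]
      have hmt := Stmt4Aux.match_term S Z s ℓ hℓ ℓ' hℓ' u [] b List.Chain.nil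
        (by simpa using hmem) z (interior_subset hz)
      simp only [List.map_nil] at hmt
      rw [hmt]
      show u z = Complex.exp (s * 0) * u z
      simp
    · intro q hqZ hqne
      rw [if_neg]
      intro hpre
      exact hqne (Stmt4Aux.Z_nested S Z hZ1 N hN hmem hqZ hpre).symm
    · intro h; exact absurd hmem h
  · have hnopre : ∀ p ∈ Z, ¬ p <+: (bar b :: List.map bar []) := by
      intro p hp hpre
      simp only [List.map_nil] at hpre
      have hpne := (hZ1 p hp).1
      have hlen1 : p.length = 1 := by
        have h1 := hpre.length_le
        have h2 : 0 < p.length := List.length_pos_iff.2 hpne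
        simp at h1
        omega
      have : p = [bar b] := hpre.eq_of_length (by simp [hlen1])
      exact hmem (this ▸ hp)
    have hmain := Stmt4Aux.main_ind S Z hZ1 N hN s ℓ hℓ ℓ' hℓ' u hfix N [] b
      List.Chain.nil (by simp) hnopre z hz
    simp only [List.map_nil] at hmain
    have hlhs : Complex.exp (s * Stmt4Aux.lam S ℓ b [] z) * u (Stmt4Aux.pt S [] z) = u z := by
      show Complex.exp (s * 0) * u z = u z
      simp
    rw [← hlhs, hmain]
end
end
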